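/- A subsemigroup of IS(X) that is minimal among transitive subsemigroups (with respect to inclusion) and contains the zero element is 0-simple: every nonzero ideal of it equals the whole semigroup, and its square is not the zero ideal. -/

import Mathlib

def IsSubsemigroup {X : Type*} (S : Set (X ≃. X)) : Prop :=
  ∀ f ∈ S, ∀ g ∈ S, f.trans g ∈ S

def IsTransitiveSet {X : Type*} (S : Set (X ≃. X)) : Prop :=
  ∀ x y : X, ∃ f ∈ S, f x = some y

def IsIdealOf {X : Type*} (I S : Set (X ≃. X)) : Prop :=
  I ⊆ S ∧ ∀ f ∈ S, ∀ g ∈ I, f.trans g ∈ I ∧ g.trans f ∈ I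

/-- A minimal transitive subsemigroup of `IS(X)` containing the zero element is
`0`-simple: its square is not `{0}` and every nonzero ideal is the whole semigroup. -/
theorem minimal_transitive_is_zero_simple {X : Type*} (S : Set (X ≃. X))
    (hS : IsSubsemigroup S) (hStr : IsTransitiveSet S)
    (hzero : (⊥ : X ≃. X) ∈ S)
    (hmin : ∀ T ⊆ S, IsSubsemigroup T → IsTransitiveSet T → T = S) :
    (∃ f ∈ S, ∃ g ∈ S, f.trans g ≠ (⊥ : X ≃. X)) ∧
      ∀ I : Set (X ≃. X), IsIdealOf I S → (∃ g ∈ I, g ≠ (⊥ : X ≃. X)) → I = S := by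
  constructor
  · by_cases hX : Nonempty X
    · obtain ⟨x⟩ := hX
      obtain ⟨f, hf, hfx⟩ := hStr x x
      refine ⟨f, hf, f, hf, fun h => ?_⟩
      have : f.trans f x = some x := (PEquiv.trans_eq_some f f x x).2 ⟨x, hfx, hfx⟩
      rw [h, PEquiv.bot_apply] at this
      exact absurd this (by simp)
    · exfalso
      have hemp : (∅ : Set (X ≃. X)) = S :=
        hmin ∅ (by simp) (fun f hf => absurd hf (by simp))
          (fun x y => absurd ⟨x⟩ hX)
      rw [← hemp] at hzero
      exact hzero
  · rintro I ⟨hIS, hIdeal⟩ ⟨g, hgI, hgne⟩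
    have hab : ∃ a b, g a = some b := by
      by_contra hc
      push_neg at hc
      apply hgne
      ext a b
      have := hc a
      cases hga : g a with
      | none => simp [hga, PEquiv.bot_apply]
      | some c => exact absurd hga (this c)
    obtain ⟨a, b, hab⟩ := hab
    refine hmin I hIS (fun f hf g' hg' => (hIdeal f (hIS hf) g' hg').1) ?_
    intro x y
    obtain ⟨f, hfS, hfx⟩ := hStr x a
    obtain ⟨h, hhS, hhb⟩ := hStr b y
    have hgh : g.trans h ∈ I := (hIdeal h hhS g hgI).2
    have hmem : f.trans (g.trans h) ∈ I := (hIdeal f hfS _ hgh).1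
    refine ⟨f.trans (g.trans h), hmem, ?_⟩
    exact (PEquiv.trans_eq_some _ _ x y).2
      ⟨a, hfx, (PEquiv.trans_eq_some _ _ a y).2 ⟨b, hab, hhb⟩⟩
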